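/- arXiv:1109.2967 — 2 statements merged into one kernel-verified Lean document; each statement's English description precedes it below -/
import Mathlib

section
/- For every integer k ≥ 0 and every integer ℓ there is a constant C > 0 such that for every g : ℂ → ℂ infinitely differentiable on D*, the function g̃(z) = z^{k+ℓ} g(z) on D* satisfies Σ_{j=0}^{k} ∫_{D*} ‖Dʲg̃(z)‖² dV(z) ≤ C · Σ_{j=0}^{k} ∫_{D*} |z|^{2ℓ} ‖Dʲg(z)‖² dV(z), as an inequality in [0,∞]; in particular, multiplication by z^{k+ℓ} maps the weighted Sobolev space W^k(D*, ℓφ) boundedly into the unweighted Sobolev space of order k. -/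
open MeasureTheory Complex

noncomputable section

/-- The punctured open unit disc. -/
def Dstar : Set ℂ := {z | 0 < ‖z‖ ∧ ‖z‖ < 1}

lemma Dstar_open : IsOpen Dstar :=
  (isOpen_lt continuous_const continuous_norm).inter
    (isOpen_lt continuous_norm continuous_const)

lemma Dstar_ne (z : ℂ) (hz : z ∈ Dstar) : z ≠ 0 := by
  simpa [norm_pos_iff] using hz.1

lemma contDiffOn_zpowC (m : ℤ) : ContDiffOn ℂ (⊤ : ℕ∞) (fun z : ℂ => z ^ m) Dstar := by
  intro z hz
  have hz0 : z ≠ 0 := Dstar_ne z hz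
  apply ContDiffAt.contDiffWithinAt
  cases m with
  | ofNat n =>
      simpa [zpow_natCast] using ((contDiff_id (𝕜 := ℂ)).pow n).contDiffAt (x := z)
  | negSucc n =>
      have : (fun z : ℂ => z ^ (Int.negSucc n)) = fun z : ℂ => (z ^ (n + 1))⁻¹ := by
        ext w; rw [zpow_negSucc]
      rw [this]
      exact (((contDiff_id (𝕜 := ℂ)).pow (n+1)).contDiffAt (x := z)).inv (pow_ne_zero _ hz0)

lemma zpow_iter_norm (m : ℤ) (i : ℕ) (z : ℂ) (hz : z ∈ Dstar) :
    ‖iteratedFDerivWithin ℝ i (fun z : ℂ => z ^ m) Dstar z‖ =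
      ‖∏ t ∈ Finset.range i, ((m : ℂ) - t)‖ * ‖z‖ ^ (m - i) := by
  have hu : UniqueDiffOn ℂ Dstar := Dstar_open.uniqueDiffOn
  have huR : UniqueDiffOn ℝ Dstar := Dstar_open.uniqueDiffOn
  have hT := (contDiffOn_zpowC m).ftaylorSeriesWithin hu
  have hR := hT.restrictScalars ℝ
  have heq := hR.eq_iteratedFDerivWithin_of_uniqueDiffOn (m := i) (by exact_mod_cast le_top)
      huR hz
  rw [← heq]
  have h1 : ‖(ftaylorSeriesWithin ℂ (fun z : ℂ => z ^ m) Dstar z i).restrictScalars ℝ‖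
      = ‖iteratedFDerivWithin ℂ i (fun z : ℂ => z ^ m) Dstar z‖ := rfl
  simp only [FormalMultilinearSeries.restrictScalars]
  rw [h1, norm_iteratedFDerivWithin_eq_norm_iteratedDerivWithin]
  have h2 : iteratedDerivWithin i (fun z : ℂ => z ^ m) Dstar z
      = iteratedDeriv i (fun z : ℂ => z ^ m) z := by
    rw [iteratedDerivWithin_eq_iteratedFDerivWithin, iteratedDeriv_eq_iteratedFDeriv,
      iteratedFDerivWithin_of_isOpen i Dstar_open hz]
  rw [h2, iteratedDeriv_eq_iterate, iter_deriv_zpow]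
  rw [norm_mul, norm_zpow]

lemma choose_le_two_pow' {j i : ℕ} (h : i ≤ j) : j.choose i ≤ 2 ^ j :=
  calc j.choose i ≤ ∑ t ∈ Finset.range (j+1), j.choose t :=
        Finset.single_le_sum (fun _ _ => Nat.zero_le _)
          (Finset.mem_range.mpr (Nat.lt_succ_of_le h))
  _ = 2 ^ j := Nat.sum_range_choose j

lemma pointwise_bound (k : ℕ) (ℓ m0 : ℤ) (hm : (k : ℤ) + ℓ ≤ m0) (g : ℂ → ℂ)
    (hg : ContDiffOn ℝ (⊤ : ℕ∞) g Dstar) {j : ℕ} (hj : j ≤ k) {z : ℂ} (hz : z ∈ Dstar) :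
    ‖iteratedFDerivWithin ℝ j (fun z : ℂ => z ^ m0 * g z) Dstar z‖ ≤
      (2 ^ k * (∑ i ∈ Finset.range (k+1),
          ‖∏ t ∈ Finset.range i, ((m0 : ℂ) - t)‖) + 1) *
        ∑ m ∈ Finset.range (k+1),
          ‖z‖ ^ ℓ * ‖iteratedFDerivWithin ℝ m g Dstar z‖ := by
  set A : ℕ → ℝ := fun i => ‖∏ t ∈ Finset.range i, ((m0 : ℂ) - t)‖ with hA
  set SA : ℝ := ∑ i ∈ Finset.range (k+1), A i with hSA
  set B : ℝ := 2 ^ k * SA + 1 with hB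
  have hAnn : ∀ i, 0 ≤ A i := fun i => norm_nonneg _
  have hBnn : (0:ℝ) ≤ 2 ^ k * (∑ i ∈ Finset.range (k+1), A i) + 1 := by positivity
  have hSAnn : 0 ≤ SA := Finset.sum_nonneg fun i _ => hAnn i
  have huR : UniqueDiffOn ℝ Dstar := Dstar_open.uniqueDiffOn
  have hf : ContDiffOn ℝ (⊤ : ℕ∞) (fun z : ℂ => z ^ m0) Dstar :=
    (contDiffOn_zpowC m0).restrict_scalars ℝ
  have habs : (0:ℝ) < ‖z‖ := hz.1
  have hle1 : ‖z‖ ≤ 1 := le_of_lt hz.2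
  have htnn : ∀ m : ℕ, 0 ≤ ‖z‖ ^ ℓ * ‖iteratedFDerivWithin ℝ m g Dstar z‖ :=
    fun m => mul_nonneg (zpow_nonneg habs.le ℓ) (norm_nonneg _)
  have step1 := norm_iteratedFDerivWithin_mul_le (𝕜 := ℝ) hf hg huR hz
      (n := j) (by exact_mod_cast le_top)
  refine step1.trans ?_
  have step2 : ∀ i ∈ Finset.range (j+1),
      (j.choose i : ℝ) * ‖iteratedFDerivWithin ℝ i (fun z : ℂ => z ^ m0) Dstar z‖ *
        ‖iteratedFDerivWithin ℝ (j - i) g Dstar z‖ ≤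
      B * (‖z‖ ^ ℓ * ‖iteratedFDerivWithin ℝ (j - i) g Dstar z‖) := by
    intro i hi
    rw [Finset.mem_range, Nat.lt_succ_iff] at hi
    have h1 : ‖iteratedFDerivWithin ℝ i (fun z : ℂ => z ^ m0) Dstar z‖
        = A i * ‖z‖ ^ (m0 - i) := zpow_iter_norm m0 i z hz
    have h2 : ‖z‖ ^ (m0 - i) ≤ ‖z‖ ^ ℓ :=
      zpow_right_anti₀ habs hle1 (by omega)
    have h3 : (j.choose i : ℝ) ≤ 2 ^ k := by
      calc (j.choose i : ℝ) ≤ ((2:ℕ) ^ j : ℕ) := by exact_mod_cast choose_le_two_pow' hi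
      _ ≤ ((2:ℕ) ^ k : ℕ) := by exact_mod_cast Nat.pow_le_pow_right (by norm_num) hj
      _ = 2 ^ k := by push_cast; ring
    have h4 : A i ≤ SA := Finset.single_le_sum (fun i _ => hAnn i)
      (Finset.mem_range.mpr (Nat.lt_succ_of_le (hi.trans hj)))
    have hBle : (j.choose i : ℝ) * A i ≤ B := by
      calc (j.choose i : ℝ) * A i ≤ 2 ^ k * SA :=
            mul_le_mul h3 h4 (hAnn i) (by positivity)
      _ ≤ B := by rw [hB]; linarith
    calc (j.choose i : ℝ) * ‖iteratedFDerivWithin ℝ i (fun z : ℂ => z ^ m0) Dstar z‖ *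
          ‖iteratedFDerivWithin ℝ (j - i) g Dstar z‖
        = ((j.choose i : ℝ) * A i) *
            (‖z‖ ^ (m0 - i) * ‖iteratedFDerivWithin ℝ (j - i) g Dstar z‖) := by
          rw [h1]; ring
      _ ≤ B * (‖z‖ ^ ℓ * ‖iteratedFDerivWithin ℝ (j - i) g Dstar z‖) := by
          apply mul_le_mul hBle (mul_le_mul_of_nonneg_right h2 (norm_nonneg _))
            (mul_nonneg (zpow_nonneg habs.le _) (norm_nonneg _))
            (le_trans (by positivity) hBle)
  have hreflect : (∑ i ∈ Finset.range (j+1),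
        ‖z‖ ^ ℓ * ‖iteratedFDerivWithin ℝ (j - i) g Dstar z‖)
      = ∑ m ∈ Finset.range (j+1),
        ‖z‖ ^ ℓ * ‖iteratedFDerivWithin ℝ m g Dstar z‖ := by
    have h := Finset.sum_range_reflect
      (fun m => ‖z‖ ^ ℓ * ‖iteratedFDerivWithin ℝ m g Dstar z‖) (j+1)
    simpa using h
  calc (∑ i ∈ Finset.range (j+1), (j.choose i : ℝ) *
        ‖iteratedFDerivWithin ℝ i (fun z : ℂ => z ^ m0) Dstar z‖ *
        ‖iteratedFDerivWithin ℝ (j - i) g Dstar z‖)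
      ≤ ∑ i ∈ Finset.range (j+1),
          B * (‖z‖ ^ ℓ * ‖iteratedFDerivWithin ℝ (j - i) g Dstar z‖) :=
        Finset.sum_le_sum step2
    _ = B * ∑ i ∈ Finset.range (j+1),
          ‖z‖ ^ ℓ * ‖iteratedFDerivWithin ℝ (j - i) g Dstar z‖ := by
        rw [Finset.mul_sum]
    _ = B * ∑ m ∈ Finset.range (j+1),
          ‖z‖ ^ ℓ * ‖iteratedFDerivWithin ℝ m g Dstar z‖ := by rw [hreflect]
    _ ≤ B * ∑ m ∈ Finset.range (k+1),
          ‖z‖ ^ ℓ * ‖iteratedFDerivWithin ℝ m g Dstar z‖ := by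
        apply mul_le_mul_of_nonneg_left _ (by rw [hB, hSA]; exact hBnn)
        apply Finset.sum_le_sum_of_subset_of_nonneg
        · exact Finset.range_subset_range.mpr (by omega)
        · exact fun m _ _ => htnn m

lemma pointwise_sq (k : ℕ) (ℓ m0 : ℤ) (hm : (k : ℤ) + ℓ ≤ m0) (g : ℂ → ℂ)
    (hg : ContDiffOn ℝ (⊤ : ℕ∞) g Dstar) {j : ℕ} (hj : j ≤ k) {z : ℂ} (hz : z ∈ Dstar) :
    ‖iteratedFDerivWithin ℝ j (fun z : ℂ => z ^ m0 * g z) Dstar z‖ ^ 2 ≤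
      ((k+1 : ℝ) * (2 ^ k * (∑ i ∈ Finset.range (k+1),
          ‖∏ t ∈ Finset.range i, ((m0 : ℂ) - t)‖) + 1) ^ 2) *
        ∑ m ∈ Finset.range (k+1),
          ‖z‖ ^ (2 * ℓ) * ‖iteratedFDerivWithin ℝ m g Dstar z‖ ^ 2 := by
  set B : ℝ := 2 ^ k * (∑ i ∈ Finset.range (k+1),
      ‖∏ t ∈ Finset.range i, ((m0 : ℂ) - t)‖) + 1 with hB
  have hBnn : (0:ℝ) ≤ B := by
    rw [hB]
    have : (0:ℝ) ≤ ∑ i ∈ Finset.range (k+1), ‖∏ t ∈ Finset.range i, ((m0 : ℂ) - t)‖ :=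
      Finset.sum_nonneg fun i _ => norm_nonneg _
    positivity
  have habs : (0:ℝ) < ‖z‖ := hz.1
  have h1 := pointwise_bound k ℓ m0 hm g hg hj hz
  have hTnn : (0:ℝ) ≤ ∑ m ∈ Finset.range (k+1),
      ‖z‖ ^ ℓ * ‖iteratedFDerivWithin ℝ m g Dstar z‖ :=
    Finset.sum_nonneg fun m _ => mul_nonneg (zpow_nonneg habs.le ℓ) (norm_nonneg _)
  have h2 : ‖iteratedFDerivWithin ℝ j (fun z : ℂ => z ^ m0 * g z) Dstar z‖ ^ 2 ≤
      (B * ∑ m ∈ Finset.range (k+1),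
        ‖z‖ ^ ℓ * ‖iteratedFDerivWithin ℝ m g Dstar z‖) ^ 2 :=
    pow_le_pow_left₀ (norm_nonneg _) h1 2
  refine h2.trans ?_
  rw [mul_pow]
  have h3 : (∑ m ∈ Finset.range (k+1),
      ‖z‖ ^ ℓ * ‖iteratedFDerivWithin ℝ m g Dstar z‖) ^ 2 ≤
      (k+1 : ℝ) * ∑ m ∈ Finset.range (k+1),
        (‖z‖ ^ ℓ * ‖iteratedFDerivWithin ℝ m g Dstar z‖) ^ 2 := by
    have := sq_sum_le_card_mul_sum_sq
      (s := Finset.range (k+1))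
      (f := fun m => ‖z‖ ^ ℓ * ‖iteratedFDerivWithin ℝ m g Dstar z‖)
    simpa using this
  have h4 : ∀ m : ℕ, (‖z‖ ^ ℓ * ‖iteratedFDerivWithin ℝ m g Dstar z‖) ^ 2
      = ‖z‖ ^ (2 * ℓ) * ‖iteratedFDerivWithin ℝ m g Dstar z‖ ^ 2 := by
    intro m
    rw [mul_pow, two_mul, zpow_add₀ (ne_of_gt habs)]
    ring
  calc B ^ 2 * (∑ m ∈ Finset.range (k+1),
        ‖z‖ ^ ℓ * ‖iteratedFDerivWithin ℝ m g Dstar z‖) ^ 2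
      ≤ B ^ 2 * ((k+1 : ℝ) * ∑ m ∈ Finset.range (k+1),
          (‖z‖ ^ ℓ * ‖iteratedFDerivWithin ℝ m g Dstar z‖) ^ 2) :=
        mul_le_mul_of_nonneg_left h3 (sq_nonneg B)
    _ = ((k+1 : ℝ) * B ^ 2) * ∑ m ∈ Finset.range (k+1),
          ‖z‖ ^ (2 * ℓ) * ‖iteratedFDerivWithin ℝ m g Dstar z‖ ^ 2 := by
        rw [Finset.sum_congr rfl (fun m _ => h4 m)]; ring


theorem multiplication_weighted_sobolev_bound (k : ℕ) (ℓ : ℤ) :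
    ∃ C : ℝ, 0 < C ∧
      ∀ g : ℂ → ℂ, ContDiffOn ℝ (⊤ : ℕ∞) g Dstar →
        (∑ j ∈ Finset.range (k + 1),
            ∫⁻ z in Dstar,
              ENNReal.ofReal
                (‖iteratedFDerivWithin ℝ j
                    (fun z : ℂ => z ^ ((k : ℤ) + ℓ) * g z) Dstar z‖ ^ 2))
          ≤ ENNReal.ofReal C *
            (∑ j ∈ Finset.range (k + 1),
              ∫⁻ z in Dstar,
                ENNReal.ofReal (‖z‖ ^ (2 * ℓ) *
                  ‖iteratedFDerivWithin ℝ j g Dstar z‖ ^ 2)) := by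
  set m0 : ℤ := (k : ℤ) + ℓ with hm0
  set C0 : ℝ := (k+1 : ℝ) * (2 ^ k * (∑ i ∈ Finset.range (k+1),
      ‖∏ t ∈ Finset.range i, ((m0 : ℂ) - t)‖) + 1) ^ 2 with hC0
  have hSnn : (0:ℝ) ≤ ∑ i ∈ Finset.range (k+1),
      ‖∏ t ∈ Finset.range i, ((m0 : ℂ) - t)‖ :=
    Finset.sum_nonneg fun i _ => norm_nonneg _
  have hC0pos : 0 < C0 := by rw [hC0]; positivity
  refine ⟨(k+1 : ℝ) * C0, by positivity, ?_⟩
  intro g hg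
  have huR : UniqueDiffOn ℝ Dstar := Dstar_open.uniqueDiffOn
  have hmeasD : MeasurableSet Dstar := Dstar_open.measurableSet
  -- ae measurability of the weighted terms
  have hGmeas : ∀ m : ℕ, AEMeasurable (fun z : ℂ => ENNReal.ofReal
      (‖z‖ ^ (2 * ℓ) * ‖iteratedFDerivWithin ℝ m g Dstar z‖ ^ 2))
      (volume.restrict Dstar) := by
    intro m
    have c1 : ContinuousOn (fun z : ℂ => ‖z‖ ^ (2 * ℓ)) Dstar := by
      intro z hz
      exact ((continuousAt_zpow₀ (‖z‖) (2 * ℓ)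
        (Or.inl (ne_of_gt hz.1))).comp continuous_norm.continuousAt).continuousWithinAt
    have c2 : ContinuousOn (fun z : ℂ => ‖iteratedFDerivWithin ℝ m g Dstar z‖ ^ 2) Dstar :=
      ((hg.continuousOn_iteratedFDerivWithin (by exact_mod_cast le_top) huR).norm).pow 2
    exact (ENNReal.continuous_ofReal.comp_continuousOn (c1.mul c2)).aemeasurable hmeasD
  -- bound each term of the LHS
  have hterm : ∀ j ∈ Finset.range (k+1),
      (∫⁻ z in Dstar, ENNReal.ofReal
          (‖iteratedFDerivWithin ℝ j (fun z : ℂ => z ^ m0 * g z) Dstar z‖ ^ 2))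
        ≤ ENNReal.ofReal C0 *
          ∑ m ∈ Finset.range (k+1), ∫⁻ z in Dstar,
            ENNReal.ofReal (‖z‖ ^ (2 * ℓ) *
              ‖iteratedFDerivWithin ℝ m g Dstar z‖ ^ 2) := by
    intro j hj
    rw [Finset.mem_range, Nat.lt_succ_iff] at hj
    have hptw : ∀ᵐ z ∂(volume.restrict Dstar),
        ENNReal.ofReal (‖iteratedFDerivWithin ℝ j (fun z : ℂ => z ^ m0 * g z) Dstar z‖ ^ 2)
          ≤ ENNReal.ofReal C0 * ∑ m ∈ Finset.range (k+1),
            ENNReal.ofReal (‖z‖ ^ (2 * ℓ) *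
              ‖iteratedFDerivWithin ℝ m g Dstar z‖ ^ 2) := by
      filter_upwards [ae_restrict_mem hmeasD] with z hz
      have hle := pointwise_sq k ℓ m0 (le_of_eq hm0.symm) g hg hj hz
      have h1 : ENNReal.ofReal
          (‖iteratedFDerivWithin ℝ j (fun z : ℂ => z ^ m0 * g z) Dstar z‖ ^ 2)
          ≤ ENNReal.ofReal (C0 * ∑ m ∈ Finset.range (k+1),
              ‖z‖ ^ (2 * ℓ) * ‖iteratedFDerivWithin ℝ m g Dstar z‖ ^ 2) :=
        ENNReal.ofReal_le_ofReal hle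
      refine h1.trans (le_of_eq ?_)
      rw [ENNReal.ofReal_mul hC0pos.le,
        ENNReal.ofReal_sum_of_nonneg (fun m _ =>
          mul_nonneg (zpow_nonneg (norm_nonneg z) _) (sq_nonneg _))]
    calc (∫⁻ z in Dstar, ENNReal.ofReal
          (‖iteratedFDerivWithin ℝ j (fun z : ℂ => z ^ m0 * g z) Dstar z‖ ^ 2))
        ≤ ∫⁻ z in Dstar, ENNReal.ofReal C0 * ∑ m ∈ Finset.range (k+1),
            ENNReal.ofReal (‖z‖ ^ (2 * ℓ) *
              ‖iteratedFDerivWithin ℝ m g Dstar z‖ ^ 2) := lintegral_mono_ae hptw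
      _ = ENNReal.ofReal C0 * ∫⁻ z in Dstar, ∑ m ∈ Finset.range (k+1),
            ENNReal.ofReal (‖z‖ ^ (2 * ℓ) *
              ‖iteratedFDerivWithin ℝ m g Dstar z‖ ^ 2) :=
          lintegral_const_mul' _ _ ENNReal.ofReal_ne_top
      _ = ENNReal.ofReal C0 * ∑ m ∈ Finset.range (k+1), ∫⁻ z in Dstar,
            ENNReal.ofReal (‖z‖ ^ (2 * ℓ) *
              ‖iteratedFDerivWithin ℝ m g Dstar z‖ ^ 2) := by
          rw [lintegral_finset_sum' _ (fun m _ => hGmeas m)]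
  calc (∑ j ∈ Finset.range (k + 1), ∫⁻ z in Dstar, ENNReal.ofReal
        (‖iteratedFDerivWithin ℝ j (fun z : ℂ => z ^ m0 * g z) Dstar z‖ ^ 2))
      ≤ ∑ _x ∈ Finset.range (k + 1), ENNReal.ofReal C0 *
          ∑ m ∈ Finset.range (k+1), ∫⁻ z in Dstar,
            ENNReal.ofReal (‖z‖ ^ (2 * ℓ) *
              ‖iteratedFDerivWithin ℝ m g Dstar z‖ ^ 2) := Finset.sum_le_sum hterm
    _ = ((k+1 : ℕ) : ENNReal) * (ENNReal.ofReal C0 *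
          ∑ m ∈ Finset.range (k+1), ∫⁻ z in Dstar,
            ENNReal.ofReal (‖z‖ ^ (2 * ℓ) *
              ‖iteratedFDerivWithin ℝ m g Dstar z‖ ^ 2)) := by
        rw [Finset.sum_const, Finset.card_range, nsmul_eq_mul]
    _ = ENNReal.ofReal ((k+1 : ℝ) * C0) *
          ∑ m ∈ Finset.range (k+1), ∫⁻ z in Dstar,
            ENNReal.ofReal (‖z‖ ^ (2 * ℓ) *
              ‖iteratedFDerivWithin ℝ m g Dstar z‖ ^ 2) := by
        have h5 : ((k+1 : ℕ) : ENNReal) = ENNReal.ofReal ((k : ℝ) + 1) := by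
          rw [← ENNReal.ofReal_natCast (k+1)]
          norm_num
        rw [← mul_assoc]
        congr 1
        rw [h5, ← ENNReal.ofReal_mul (by positivity)]
end
end

section
/- Let j, j' ≥ 0 and k, k' ≥ −1 be integers. The Laurent monomials m_{j,k}(w) = (w₁/w₂)^j · w₂^k are square-integrable on H, and ∫_H m_{j,k}(w) · conj(m_{j',k'}(w)) dV(w) equals π²/((j+1)(k+2)) if (j,k) = (j',k'), and equals 0 if (j,k) ≠ (j',k'); that is, these monomials form an orthogonal family in L²(H) with the stated norms. -/
open MeasureTheory Complex
open scoped ENNReal NNReal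

noncomputable section

/-- The Hartogs triangle. -/
def Hartogs : Set (ℂ × ℂ) := {w | ‖w.1‖ < ‖w.2‖ ∧ ‖w.2‖ < 1}

/-- The Laurent monomial `(w₁/w₂)^j w₂^k` on the Hartogs triangle. -/
def laurentMonomial (j : ℕ) (k : ℤ) (w : ℂ × ℂ) : ℂ := (w.1 / w.2) ^ j * w.2 ^ k

private lemma ang (n : ℤ) :
    ∫ θ in Set.Ioo (-Real.pi) Real.pi, Complex.exp (n * θ * Complex.I)
      = if n = 0 then ((2 * Real.pi : ℝ) : ℂ) else 0 := by
  have hle : (-Real.pi) ≤ Real.pi := by linarith [Real.pi_pos]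
  rw [← integral_Ioc_eq_integral_Ioo, ← intervalIntegral.integral_of_le hle]
  split_ifs with h
  · subst h
    simp only [Int.cast_zero, zero_mul, Complex.exp_zero]
    rw [intervalIntegral.integral_const]
    push_cast
    rw [sub_neg_eq_add, Complex.real_smul]
    push_cast
    ring
  · have hrw : ∀ θ : ℝ, (n : ℂ) * θ * Complex.I = ((n : ℂ) * Complex.I) * θ := fun θ => by ring
    simp_rw [hrw]
    rw [integral_exp_mul_complex (by
      simp only [ne_eq, mul_eq_zero, Complex.I_ne_zero, or_false, Int.cast_eq_zero]
      exact h)]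
    have h2 : ((n:ℂ) * Complex.I) * (Real.pi:ℂ) = ((n:ℂ) * Complex.I) * ((-Real.pi : ℝ) :ℂ) + n * (2 * Real.pi * Complex.I) := by
      push_cast; ring
    rw [h2, Complex.exp_add, Complex.exp_int_mul_two_pi_mul_I, mul_one, sub_self, zero_div]

private lemma disk (a b : ℕ) (R : ℝ) (hR : 0 < R) :
    ∫ z in Metric.ball (0:ℂ) R, z ^ a * ((starRingEnd ℂ) z) ^ b
      = if a = b then ((Real.pi : ℂ) * (R:ℂ) ^ (2*a+2) / ((a:ℂ)+1)) else 0 := by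
  have hS : MeasurableSet (Set.Ioo (0:ℝ) R ×ˢ Set.Ioo (-Real.pi) Real.pi) :=
    measurableSet_Ioo.prod measurableSet_Ioo
  have htarget : polarCoord.target = Set.Ioi (0:ℝ) ×ˢ Set.Ioo (-Real.pi) Real.pi := rfl
  have hsub : Set.Ioo (0:ℝ) R ×ˢ Set.Ioo (-Real.pi) Real.pi ⊆ polarCoord.target := by
    rw [htarget]
    exact Set.prod_mono Set.Ioo_subset_Ioi_self subset_rfl
  have key : ∫ z in Metric.ball (0:ℂ) R, z ^ a * ((starRingEnd ℂ) z) ^ b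
      = ∫ p in Set.Ioo (0:ℝ) R ×ˢ Set.Ioo (-Real.pi) Real.pi,
          ((p.1 : ℂ) ^ (a+b+1)) * Complex.exp (((a - b : ℤ) : ℂ) * p.2 * Complex.I) := by
    rw [← MeasureTheory.integral_indicator measurableSet_ball,
        ← Complex.integral_comp_polarCoord_symm]
    have heq : Set.EqOn
        (fun p : ℝ × ℝ => p.1 • Set.indicator (Metric.ball (0:ℂ) R)
            (fun z => z ^ a * ((starRingEnd ℂ) z) ^ b) (Complex.polarCoord.symm p))
        (Set.indicator (Set.Ioo (0:ℝ) R ×ˢ Set.Ioo (-Real.pi) Real.pi)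
            (fun p : ℝ × ℝ => ((p.1 : ℂ) ^ (a+b+1))
              * Complex.exp (((a - b : ℤ) : ℂ) * p.2 * Complex.I)))
        polarCoord.target := by
      intro p hp
      rw [htarget] at hp
      obtain ⟨hp1, hp2⟩ := hp
      rw [Set.mem_Ioi] at hp1
      have hz : Complex.polarCoord.symm p = (p.1:ℂ) * Complex.exp (p.2 * Complex.I) := by
        rw [Complex.polarCoord_symm_apply, Complex.exp_mul_I, ← Complex.ofReal_cos,
          ← Complex.ofReal_sin]
      by_cases hmem : p.1 < R
      · have hball : Complex.polarCoord.symm p ∈ Metric.ball (0:ℂ) R := by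
          rw [Metric.mem_ball, dist_zero_right, Complex.norm_polarCoord_symm,
            abs_of_pos hp1]
          exact hmem
        simp only [Set.indicator_of_mem hball,
          Set.indicator_of_mem (Set.mem_prod.2 ⟨Set.mem_Ioo.2 ⟨hp1, hmem⟩, hp2⟩)]
        have hconj : (starRingEnd ℂ) (Complex.polarCoord.symm p)
            = (p.1:ℂ) * Complex.exp (-((p.2:ℂ) * Complex.I)) := by
          rw [hz, map_mul, Complex.conj_ofReal, ← Complex.exp_conj, map_mul, Complex.conj_ofReal,
            Complex.conj_I, mul_neg]
        rw [hconj, hz, Complex.real_smul, mul_pow, mul_pow, ← Complex.exp_nat_mul,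
          ← Complex.exp_nat_mul]
        have hmul : Complex.exp ((a:ℂ) * ((p.2:ℂ) * Complex.I))
              * Complex.exp ((b:ℂ) * -((p.2:ℂ) * Complex.I))
            = Complex.exp (((a - b : ℤ) : ℂ) * p.2 * Complex.I) := by
          rw [← Complex.exp_add]; congr 1; push_cast; ring
        linear_combination ((p.1:ℂ))^(a+b+1) * hmul
      · have hball : Complex.polarCoord.symm p ∉ Metric.ball (0:ℂ) R := by
          rw [Metric.mem_ball, dist_zero_right, Complex.norm_polarCoord_symm,
            abs_of_pos hp1]
          exact hmem
        simp only [Set.indicator_of_notMem hball,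
          Set.indicator_of_notMem (fun hc : p ∈ Set.Ioo (0:ℝ) R ×ˢ Set.Ioo (-Real.pi) Real.pi => hmem hc.1.2), smul_zero]
    rw [setIntegral_congr_fun polarCoord.open_target.measurableSet heq,
      MeasureTheory.setIntegral_indicator hS,
      Set.inter_eq_self_of_subset_right hsub]
  rw [key, Measure.volume_eq_prod]
  rw [show (∫ p in Set.Ioo (0:ℝ) R ×ˢ Set.Ioo (-Real.pi) Real.pi,
        ((p.1 : ℂ) ^ (a+b+1)) * Complex.exp (((a - b : ℤ) : ℂ) * p.2 * Complex.I)
        ∂(volume.prod volume))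
      = (∫ r in Set.Ioo (0:ℝ) R, (r:ℂ)^(a+b+1))
        * (∫ θ in Set.Ioo (-Real.pi) Real.pi,
            Complex.exp (((a - b : ℤ) : ℂ) * θ * Complex.I))
    from MeasureTheory.setIntegral_prod_mul (fun r : ℝ => (r:ℂ)^(a+b+1))
      (fun θ : ℝ => Complex.exp (((a - b : ℤ) : ℂ) * θ * Complex.I)) _ _]
  have hrad : ∫ r in Set.Ioo (0:ℝ) R, (r:ℂ)^(a+b+1) = ((R^(a+b+2)/(a+b+2) : ℝ) : ℂ) := by
    rw [← integral_Ioc_eq_integral_Ioo, ← intervalIntegral.integral_of_le hR.le]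
    have hcast : ∀ r : ℝ, (r:ℂ)^(a+b+1) = ((r^(a+b+1) : ℝ) : ℂ) := fun r => by push_cast; ring
    simp_rw [hcast]
    rw [intervalIntegral.integral_ofReal, integral_pow]
    norm_num
    ring_nf
  rw [hrad, ang ((a:ℤ) - b)]
  by_cases hab : a = b
  · subst hab
    rw [if_pos rfl, if_pos (sub_self (a:ℤ))]
    have h1 : ((a:ℂ) + 1) ≠ 0 := by exact_mod_cast Nat.succ_ne_zero a
    have h2 : ((a:ℂ) + (a:ℂ) + 2) ≠ 0 := by
      intro hc; apply h1; linear_combination hc / 2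
    push_cast
    rw [div_mul_eq_mul_div, div_eq_div_iff h2 h1]
    ring
  · rw [if_neg hab, if_neg (sub_ne_zero.2 (by exact_mod_cast hab)), mul_zero]

private lemma hartogs_meas : MeasurableSet Hartogs := by
  have h1 : Measurable fun w : ℂ × ℂ => ‖w.1‖ :=
    continuous_norm.measurable.comp measurable_fst
  have h2 : Measurable fun w : ℂ × ℂ => ‖w.2‖ :=
    continuous_norm.measurable.comp measurable_snd
  rw [show Hartogs = {w : ℂ × ℂ | ‖w.1‖ < ‖w.2‖}
      ∩ {w : ℂ × ℂ | ‖w.2‖ < 1} from rfl]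
  exact (measurableSet_lt h1 h2).inter (measurableSet_lt h2 measurable_const)

private lemma fin_aux (p : ℕ) (q1 q2 : ℤ) (hq : -2 ≤ q1 + q2) :
    (∫⁻ w in Hartogs, ENNReal.ofReal
        ((‖w.1 / w.2‖) ^ p
          * ((‖w.2‖) ^ q1 * (‖w.2‖) ^ q2))) < ⊤ := by
  set g : ℂ × ℂ → ℝ≥0∞ := fun w => ENNReal.ofReal
      ((‖w.1 / w.2‖) ^ p * ((‖w.2‖) ^ q1 * (‖w.2‖) ^ q2))
    with hg
  have hmg : Measurable g := by
    apply ENNReal.measurable_ofReal.comp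
    apply Measurable.mul
    · exact (continuous_norm.measurable.comp
        (measurable_fst.div measurable_snd)).pow_const p
    · exact ((continuous_norm.measurable.comp measurable_snd).pow_const q1).mul
        ((continuous_norm.measurable.comp measurable_snd).pow_const q2)
  rw [← lintegral_indicator hartogs_meas, Measure.volume_eq_prod,
    lintegral_prod_symm _ (hmg.indicator hartogs_meas).aemeasurable]
  have hbound : ∀ w2 : ℂ, (∫⁻ w1, (Hartogs.indicator g (w1, w2)))
      ≤ (Metric.ball (0:ℂ) 1).indicator (fun _ => (NNReal.pi : ℝ≥0∞)) w2 := by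
    intro w2
    by_cases h1 : ‖w2‖ < 1
    · rw [Set.indicator_of_mem (by
        rw [Metric.mem_ball, dist_zero_right]; exact h1)]
      have hpt : ∀ w1 : ℂ, Hartogs.indicator g (w1, w2)
          ≤ (Metric.ball (0:ℂ) (‖w2‖)).indicator
              (fun _ => ENNReal.ofReal ((‖w2‖) ^ q1 * (‖w2‖) ^ q2)) w1 := by
        intro w1
        by_cases h2 : (w1, w2) ∈ Hartogs
        · rw [Set.indicator_of_mem h2, Set.indicator_of_mem (by
            rw [Metric.mem_ball, dist_zero_right]; exact h2.1)]
          apply ENNReal.ofReal_le_ofReal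
          have h3 : ‖w1 / w2‖ ≤ 1 := by
            rw [norm_div]
            exact div_le_one_of_le₀ h2.1.le (norm_nonneg _)
          have h4 : (‖w1 / w2‖) ^ p ≤ 1 := pow_le_one₀ (norm_nonneg _) h3
          have h5 : (0:ℝ) ≤ (‖w2‖) ^ q1 * (‖w2‖) ^ q2 := by positivity
          nlinarith
        · rw [Set.indicator_of_notMem h2]; exact zero_le
      calc ∫⁻ w1, Hartogs.indicator g (w1, w2)
          ≤ ∫⁻ w1, (Metric.ball (0:ℂ) (‖w2‖)).indicator
              (fun _ => ENNReal.ofReal ((‖w2‖) ^ q1 * (‖w2‖) ^ q2)) w1 :=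
            lintegral_mono hpt
        _ = ENNReal.ofReal ((‖w2‖) ^ q1 * (‖w2‖) ^ q2)
              * volume (Metric.ball (0:ℂ) (‖w2‖)) := by
            rw [lintegral_indicator measurableSet_ball, setLIntegral_const]
        _ ≤ (NNReal.pi : ℝ≥0∞) := by
            rw [Complex.volume_ball]
            rcases eq_or_lt_of_le (norm_nonneg w2) with h0 | h0
            · rw [← h0]
              simp
            · have hx : ENNReal.ofReal ((‖w2‖) ^ q1 * (‖w2‖) ^ q2)
                  * (ENNReal.ofReal (‖w2‖)) ^ 2 ≤ 1 := by
                rw [← ENNReal.ofReal_pow (norm_nonneg w2), ← ENNReal.ofReal_mul (by positivity)]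
                apply ENNReal.ofReal_le_one.2
                have he : (‖w2‖) ^ q1 * (‖w2‖) ^ q2 * (‖w2‖) ^ 2
                    = (‖w2‖) ^ ((q1 + q2 + 2).toNat) := by
                  rw [← zpow_natCast (‖w2‖) ((q1+q2+2).toNat),
                    Int.toNat_of_nonneg (by omega), ← zpow_natCast (‖w2‖) 2,
                    ← zpow_add₀ h0.ne', ← zpow_add₀ h0.ne']
                  norm_num
                rw [he]
                exact pow_le_one₀ (norm_nonneg _) h1.le
              calc ENNReal.ofReal ((‖w2‖) ^ q1 * (‖w2‖) ^ q2)
                    * ((ENNReal.ofReal (‖w2‖)) ^ 2 * (NNReal.pi : ℝ≥0∞))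
                  = (ENNReal.ofReal ((‖w2‖) ^ q1 * (‖w2‖) ^ q2)
                    * (ENNReal.ofReal (‖w2‖)) ^ 2) * (NNReal.pi : ℝ≥0∞) := by ring
                _ ≤ 1 * (NNReal.pi : ℝ≥0∞) := by
                    exact mul_le_mul_left hx _
                _ = (NNReal.pi : ℝ≥0∞) := one_mul _
    · have hz : ∀ w1 : ℂ, Hartogs.indicator g (w1, w2) = 0 := fun w1 =>
        Set.indicator_of_notMem (fun hmem => h1 hmem.2) _
      simp only [hz, lintegral_zero]
      exact zero_le
  calc ∫⁻ w2, ∫⁻ w1, Hartogs.indicator g (w1, w2)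
      ≤ ∫⁻ w2, (Metric.ball (0:ℂ) 1).indicator (fun _ => (NNReal.pi : ℝ≥0∞)) w2 :=
        lintegral_mono hbound
    _ = (NNReal.pi : ℝ≥0∞) * volume (Metric.ball (0:ℂ) 1) := by
        rw [lintegral_indicator measurableSet_ball, setLIntegral_const]
    _ < ⊤ := by
        rw [Complex.volume_ball]
        rw [lt_top_iff_ne_top]
        exact ENNReal.mul_ne_top ENNReal.coe_ne_top
          (ENNReal.mul_ne_top (ENNReal.pow_ne_top ENNReal.ofReal_ne_top) ENNReal.coe_ne_top)

private lemma laurent_meas (j : ℕ) (k : ℤ) : Measurable (laurentMonomial j k) :=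
  ((measurable_fst.div measurable_snd).pow_const j).mul (measurable_snd.pow_const k)

private lemma laurent_norm (j : ℕ) (k : ℤ) (w : ℂ × ℂ) :
    ‖laurentMonomial j k w‖ = (‖w.1 / w.2‖) ^ j * (‖w.2‖) ^ k := by
  rw [laurentMonomial, norm_mul, norm_pow, norm_zpow]

private lemma laurent_int (j j' : ℕ) (k k' : ℤ) (hk : -1 ≤ k) (hk' : -1 ≤ k') :
    IntegrableOn (fun w => laurentMonomial j k w * (starRingEnd ℂ) (laurentMonomial j' k' w))
      Hartogs := by
  constructor
  · exact ((laurent_meas j k).mul (Complex.continuous_conj.measurable.comp (laurent_meas j' k'))).aestronglyMeasurable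
  · rw [hasFiniteIntegral_iff_norm]
    have hn : ∀ w : ℂ × ℂ,
        ‖laurentMonomial j k w * (starRingEnd ℂ) (laurentMonomial j' k' w)‖
        = (‖w.1 / w.2‖) ^ (j + j')
            * ((‖w.2‖) ^ k * (‖w.2‖) ^ k') := by
      intro w
      rw [norm_mul, starRingEnd_apply, norm_star, laurent_norm, laurent_norm, pow_add]
      ring
    simp_rw [hn]
    exact fin_aux (j + j') k k' (by omega)

theorem laurent_monomials_orthogonal (j j' : ℕ) (k k' : ℤ)
    (hk : -1 ≤ k) (hk' : -1 ≤ k') :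
    (∫⁻ w in Hartogs, ENNReal.ofReal (‖laurentMonomial j k w‖ ^ 2)) < ⊤ ∧
    (∫ w in Hartogs, laurentMonomial j k w * (starRingEnd ℂ) (laurentMonomial j' k' w))
      = if j = j' ∧ k = k' then
          (Real.pi ^ 2 : ℂ) / (((j : ℂ) + 1) * ((k : ℂ) + 2))
        else 0 := by
  constructor
  · have hnorm : ∀ w : ℂ × ℂ, ENNReal.ofReal (‖laurentMonomial j k w‖ ^ 2)
        = ENNReal.ofReal ((‖w.1 / w.2‖) ^ (j * 2)
            * ((‖w.2‖) ^ k * (‖w.2‖) ^ k)) := by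
      intro w
      congr 1
      rw [laurent_norm, mul_pow, ← pow_mul, sq]
    simp_rw [hnorm]
    exact fin_aux (j * 2) k k (by omega)
  · set F : ℂ × ℂ → ℂ :=
      fun w => laurentMonomial j k w * (starRingEnd ℂ) (laurentMonomial j' k' w) with hFdef
    have hInt : Integrable (Hartogs.indicator F) ((volume : Measure ℂ).prod volume) := by
      rw [← Measure.volume_eq_prod, integrable_indicator_iff hartogs_meas]
      exact laurent_int j j' k k' hk hk'
    have hsec : ∀ w2 : ℂ, (∫ w1 : ℂ, Hartogs.indicator F (w1, w2))
        = if ‖w2‖ < 1 then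
            ∫ w1 in Metric.ball (0:ℂ) (‖w2‖), F (w1, w2) else 0 := by
      intro w2
      by_cases h1 : ‖w2‖ < 1
      · rw [if_pos h1, ← MeasureTheory.integral_indicator measurableSet_ball]
        congr 1
        funext w1
        by_cases h2 : ‖w1‖ < ‖w2‖
        · rw [Set.indicator_of_mem (show (w1, w2) ∈ Hartogs from ⟨h2, h1⟩),
            Set.indicator_of_mem (by
              rw [Metric.mem_ball, dist_zero_right]; exact h2)]
        · rw [Set.indicator_of_notMem (fun hm : (w1, w2) ∈ Hartogs => h2 hm.1),
            Set.indicator_of_notMem (by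
              rw [Metric.mem_ball, dist_zero_right]; exact h2)]
      · rw [if_neg h1]
        have hz : ∀ w1 : ℂ, Hartogs.indicator F (w1, w2) = 0 := fun w1 =>
          Set.indicator_of_notMem (fun hm : (w1, w2) ∈ Hartogs => h1 hm.2) _
        simp only [hz, integral_zero]
    have step1 : (∫ w in Hartogs, F w)
        = ∫ w2 : ℂ, if ‖w2‖ < 1 then
            ∫ w1 in Metric.ball (0:ℂ) (‖w2‖), F (w1, w2) else 0 := by
      rw [← MeasureTheory.integral_indicator hartogs_meas, Measure.volume_eq_prod,
        MeasureTheory.integral_prod_symm _ hInt]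
      exact integral_congr_ae (Filter.Eventually.of_forall hsec)
    have hdisk : ∀ w2 : ℂ, w2 ≠ 0 →
        (∫ w1 in Metric.ball (0:ℂ) (‖w2‖), F (w1, w2))
          = (w2 ^ k * (starRingEnd ℂ) w2 ^ k' / (w2 ^ (j:ℕ) * (starRingEnd ℂ) w2 ^ (j':ℕ)))
            * (if j = j' then
                ((Real.pi : ℂ) * ((‖w2‖ : ℝ) : ℂ) ^ (2*j+2) / ((j:ℂ)+1)) else 0) := by
      intro w2 hw2
      have habs : 0 < ‖w2‖ := norm_pos_iff.2 hw2
      have hFw : ∀ w1 : ℂ, F (w1, w2)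
          = (w2 ^ k * (starRingEnd ℂ) w2 ^ k' / (w2 ^ (j:ℕ) * (starRingEnd ℂ) w2 ^ (j':ℕ)))
            * (w1 ^ j * ((starRingEnd ℂ) w1) ^ j') := by
        intro w1
        simp only [hFdef, laurentMonomial, map_mul, map_pow, map_zpow₀, map_div₀]
        ring
      simp_rw [hFw]
      rw [MeasureTheory.integral_const_mul, disk j j' _ habs]
    rcases eq_or_ne j j' with rfl | hjj
    · -- j = j'
      set a := (k + 1).toNat with hadef
      set b := (k' + 1).toNat with hbdef
      have ha : ((a:ℤ)) = k + 1 := Int.toNat_of_nonneg (by omega)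
      have hb : ((b:ℤ)) = k' + 1 := Int.toNat_of_nonneg (by omega)
      have hG : ∀ w2 : ℂ, w2 ≠ 0 →
          (if ‖w2‖ < 1 then
              ∫ w1 in Metric.ball (0:ℂ) (‖w2‖), F (w1, w2) else 0)
            = (Metric.ball (0:ℂ) 1).indicator
                (fun z => ((Real.pi:ℂ)/((j:ℂ)+1)) * (z ^ a * ((starRingEnd ℂ) z) ^ b)) w2 := by
        intro w2 hw2
        by_cases h1 : ‖w2‖ < 1
        · rw [if_pos h1, Set.indicator_of_mem (by
            rw [Metric.mem_ball, dist_zero_right]; exact h1),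
            hdisk w2 hw2, if_pos rfl]
          set C := (starRingEnd ℂ) w2 with hCdef
          have hC : C ≠ 0 := by
            rw [hCdef, starRingEnd_apply]
            exact star_ne_zero.2 hw2
          have hsq : (((‖w2‖ : ℝ)):ℂ) ^ 2 = w2 * C := by
            rw [← Complex.ofReal_pow, Complex.sq_norm, Complex.mul_conj]
          have habs2 : (((‖w2‖ : ℝ)):ℂ) ^ (2*j+2) = (w2 * C) ^ (j+1) := by
            rw [show 2*j+2 = 2*(j+1) by ring, pow_mul, hsq]
          rw [habs2]
          have hw2a : w2 ^ a = w2 ^ k * w2 := by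
            rw [← zpow_natCast w2 a, ha, zpow_add_one₀ hw2]
          have hCb : C ^ b = C ^ k' * C := by
            rw [← zpow_natCast C b, hb, zpow_add_one₀ hC]
          rw [hw2a, hCb]
          have h1 : ((j:ℂ)+1) ≠ 0 := by
            exact_mod_cast Nat.succ_ne_zero j
          field_simp
          ring
        · rw [if_neg h1, Set.indicator_of_notMem (by
            rw [Metric.mem_ball, dist_zero_right]; exact h1)]
      have h0 : ∀ᵐ (z : ℂ) ∂(volume : Measure ℂ), z ≠ 0 := by
        have hs : {z : ℂ | ¬ z ≠ 0} = {0} := by ext z; simp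
        rw [ae_iff, hs]
        exact measure_singleton 0
      rw [step1, integral_congr_ae (h0.mono fun z hz => hG z hz),
        MeasureTheory.integral_indicator measurableSet_ball,
        MeasureTheory.integral_const_mul, disk a b 1 one_pos]
      by_cases hkk : k = k'
      · subst hkk
        rw [if_pos rfl, if_pos ⟨rfl, rfl⟩, Complex.ofReal_one, one_pow]
        have haC : ((a:ℂ)) = (k:ℂ) + 1 := by
          have : (((a:ℤ)):ℂ) = (((k+1 : ℤ)):ℂ) := by rw [ha]
          push_cast at this
          exact this
        rw [haC, mul_one, div_mul_div_comm]
        congr 1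
        · rw [sq]
        · ring
      · have hab : a ≠ b := fun h => hkk (by omega)
        rw [if_neg hab, mul_zero, if_neg (fun hc => hkk hc.2)]
    · -- j ≠ j'
      rw [if_neg (fun h => hjj h.1), step1]
      have hz : ∀ w2 : ℂ, (if ‖w2‖ < 1 then
          ∫ w1 in Metric.ball (0:ℂ) (‖w2‖), F (w1, w2) else 0) = 0 := by
        intro w2
        split_ifs with h1
        · by_cases hw2 : w2 = 0
          · subst hw2
            have hb : Metric.ball (0:ℂ) (‖(0:ℂ)‖) = ∅ := by simp
            rw [hb]
            exact MeasureTheory.setIntegral_empty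
          · rw [hdisk w2 hw2, if_neg hjj, mul_zero]
        · rfl
      simp only [hz, integral_zero]
end
end
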